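/- arXiv:2510.25738 — 5 statements merged into one kernel-verified Lean document; each statement's English description precedes it below -/
import Mathlib

section
/- Fix an integer ℓ ≥ 2, a vector α ∈ ℝ^ℓ with α_j > 0 for all j and ∑_{j=1}^ℓ α_j = 1, and positive reals ω_1, …, ω_ℓ. For every i ∈ {1, …, ℓ} and every p ∈ S^{ℓ−1}_{++}, there exists a vector v ∈ ℝ^ℓ with ⟨p, v⟩ = 0 such that ⟨v, z_i^{CD}(p)⟩ < 0 and ⟨v, z_j^{CD}(p)⟩ > 0 for every j ≠ i. (In other words, in the tangent hyperplane to the sphere at p there is a hyperplane such that z_i^{CD}(p) and the remaining vectors z_j^{CD}(p) point to opposite sides of it.) -/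
open Finset

/-- The individual excess demand of the `i`-th Cobb–Douglas consumer, with exponents `α`
and endowment `ω i` in good `i`. -/
noncomputable def zCD {ℓ : ℕ} (α ω : Fin ℓ → ℝ) (i : Fin ℓ) (p : Fin ℓ → ℝ) :
    Fin ℓ → ℝ :=
  fun j => if j = i then -(1 - α i) * ω i else α j * (p i / p j) * ω i

/-- for every `i` and every `p` in the positive part of the unit sphere,
there is a vector `v` tangent to the sphere at `p` (i.e. `⟨p, v⟩ = 0`) such that
`⟨v, zCD α ω i p⟩ < 0` while `⟨v, zCD α ω j p⟩ > 0` for all `j ≠ i`: the vector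
`zCD α ω i p` and the remaining ones point to opposite sides of a hyperplane in the
tangent space. -/
theorem zCD_separating_hyperplane
    (ℓ : ℕ) (hℓ : 2 ≤ ℓ)
    (α : Fin ℓ → ℝ) (hα : ∀ j, 0 < α j) (hαsum : ∑ j, α j = 1)
    (ω : Fin ℓ → ℝ) (hω : ∀ j, 0 < ω j) :
    ∀ i : Fin ℓ, ∀ p : Fin ℓ → ℝ, (∀ j, 0 < p j) → ∑ j, (p j) ^ 2 = 1 →
      ∃ v : Fin ℓ → ℝ, (∑ j, p j * v j = 0) ∧
        (∑ j, v j * zCD α ω i p j < 0) ∧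
        (∀ k : Fin ℓ, k ≠ i → 0 < ∑ j, v j * zCD α ω k p j) := by
  intro i p hp hps
  -- the coefficients
  set c : Fin ℓ → ℝ := fun j => (if j = i then (1:ℝ) else 0) - p i ^ 2 with hc
  -- general formula for the pairing with `zCD α ω k p`
  have key : ∀ k : Fin ℓ, ∑ j, (c j * p j) * zCD α ω k p j
      = p k * ω k * ((α i - p i ^ 2) - c k) := by
    intro k
    have hterm : ∀ j, (c j * p j) * zCD α ω k p j
        = α j * c j * (p k * ω k) - (if j = k then c k * p k * ω k else 0) := by
      intro j
      by_cases h : j = k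
      · subst h; simp [zCD]; ring
      · have hpj := (hp j).ne'
        simp only [zCD, if_neg h, h, if_false]
        field_simp
        ring
    have hS : ∑ j, α j * c j = α i - p i ^ 2 := by
      have : ∀ j, α j * c j = (if j = i then α j else 0) - p i ^ 2 * α j := by
        intro j; by_cases h : j = i <;> simp [hc, h] <;> ring
      rw [Finset.sum_congr rfl (fun j _ => this j), Finset.sum_sub_distrib,
        Finset.sum_ite_eq' univ i α, ← Finset.mul_sum, hαsum]
      simp
    rw [Finset.sum_congr rfl (fun j _ => hterm j), Finset.sum_sub_distrib,
      Finset.sum_ite_eq' univ k (fun _ => c k * p k * ω k), ← Finset.sum_mul, hS]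
    simp
    ring
  have hαi : α i < 1 := by
    obtain ⟨k, hk⟩ := Fintype.exists_ne_of_one_lt_card
      (by simp; omega : 1 < Fintype.card (Fin ℓ)) i
    calc α i < ∑ j, α j := by
          refine Finset.single_lt_sum hk (mem_univ i) (mem_univ k) (hα k) ?_
          intro j _ _; exact (hα j).le
      _ = 1 := hαsum
  refine ⟨fun j => c j * p j, ?_, ?_, ?_⟩
  · have : ∀ j, p j * (c j * p j)
        = (if j = i then p j ^ 2 else 0) - p i ^ 2 * p j ^ 2 := by
      intro j
      by_cases h : j = i <;> simp [hc, h] <;> ring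
    rw [Finset.sum_congr rfl (fun j _ => this j), Finset.sum_sub_distrib,
      Finset.sum_ite_eq' univ i (fun j => p j ^ 2), ← Finset.mul_sum, hps]
    simp
  · have := key i
    simp only [] at this ⊢
    rw [this]
    have hci : c i = 1 - p i ^ 2 := by simp [hc]
    rw [hci]
    have h1 : (0:ℝ) < p i * ω i := mul_pos (hp i) (hω i)
    nlinarith
  · intro k hk
    have := key k
    simp only [] at this ⊢
    rw [this]
    have hck : c k = - p i ^ 2 := by simp [hc, hk]
    rw [hck]
    have h1 : (0:ℝ) < p k * ω k := mul_pos (hp k) (hω k)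
    nlinarith [hα i]
end

section
/- Fix an integer ℓ ≥ 2, a vector α ∈ ℝ^ℓ with α_j > 0 for all j and ∑_{j=1}^ℓ α_j = 1, and positive reals ω_1, …, ω_ℓ. For every p ∈ S^{ℓ−1}_{++}, the linear span of the ℓ vectors z_1^{CD}(p), …, z_ℓ^{CD}(p) equals the hyperplane {v ∈ ℝ^ℓ : ⟨p, v⟩ = 0}. -/
open Finset

/-- for every `p` in the positive part of the unit sphere, the linear span
of the vectors `zCD α ω 1 p, …, zCD α ω ℓ p` is exactly the tangent hyperplane
`{v | ⟨p, v⟩ = 0}`. -/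
theorem zCD_span_eq_tangent_hyperplane
    (ℓ : ℕ) (hℓ : 2 ≤ ℓ)
    (α : Fin ℓ → ℝ) (hα : ∀ j, 0 < α j) (hαsum : ∑ j, α j = 1)
    (ω : Fin ℓ → ℝ) (hω : ∀ j, 0 < ω j) :
    ∀ p : Fin ℓ → ℝ, (∀ j, 0 < p j) → ∑ j, (p j) ^ 2 = 1 →
      (Submodule.span ℝ (Set.range fun i => zCD α ω i p) : Set (Fin ℓ → ℝ)) =
        {v : Fin ℓ → ℝ | ∑ j, p j * v j = 0} := by
  intro p hp hnorm
  have hp' : ∀ j, p j ≠ 0 := fun j => (hp j).ne'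
  have hω' : ∀ j, ω j ≠ 0 := fun j => (hω j).ne'
  have herase : ∀ i : Fin ℓ, ∑ j ∈ Finset.univ.erase i, α j = 1 - α i := by
    intro i
    have h := Finset.add_sum_erase Finset.univ α (Finset.mem_univ i)
    rw [hαsum] at h
    linarith
  ext v
  simp only [SetLike.mem_coe, Set.mem_setOf_eq]
  constructor
  · intro hv
    induction hv using Submodule.span_induction with
    | mem x hx =>
      obtain ⟨i, rfl⟩ := hx
      simp only [zCD]
      rw [← Finset.add_sum_erase Finset.univ _ (Finset.mem_univ i)]
      rw [if_pos rfl]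
      have hcong : ∀ j ∈ Finset.univ.erase i,
          p j * (if j = i then -(1 - α i) * ω i else α j * (p i / p j) * ω i)
            = α j * (p i * ω i) := by
        intro j hj
        rw [if_neg (Finset.ne_of_mem_erase hj)]
        field_simp [hp' j]
      rw [Finset.sum_congr rfl hcong, ← Finset.sum_mul, herase i]
      ring
    | zero => simp
    | add x y hx hy ihx ihy =>
      simp only [Pi.add_apply, mul_add, Finset.sum_add_distrib, ihx, ihy, add_zero]
    | smul c x hx ihx =>
      simp only [Pi.smul_apply, smul_eq_mul]
      rw [show (∑ j, p j * (c * x j)) = c * ∑ j, p j * x j by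
        rw [Finset.mul_sum]; exact Finset.sum_congr rfl fun j _ => by ring]
      rw [ihx, mul_zero]
  · intro hv
    have hrepr : v = ∑ i, ((-(p i * v i)) / (ω i * p i)) • zCD α ω i p := by
      funext j
      simp only [Finset.sum_apply, Pi.smul_apply, smul_eq_mul, zCD]
      rw [← Finset.add_sum_erase Finset.univ _ (Finset.mem_univ j)]
      rw [if_pos rfl]
      have hcong : ∀ i ∈ Finset.univ.erase j,
          -(p i * v i) / (ω i * p i) *
            (if j = i then -(1 - α i) * ω i else α j * (p i / p j) * ω i)
            = -(α j / p j) * (p i * v i) := by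
        intro i hi
        rw [if_neg (Ne.symm (Finset.ne_of_mem_erase hi))]
        field_simp [hp' i, hp' j, hω' i]
      rw [Finset.sum_congr rfl hcong, ← Finset.mul_sum]
      have hesum : ∑ i ∈ Finset.univ.erase j, p i * v i = -(p j * v j) := by
        have h : p j * v j + ∑ x ∈ Finset.univ.erase j, p x * v x = 0 := by
          have h0 := Finset.add_sum_erase Finset.univ (fun i => p i * v i)
            (Finset.mem_univ j)
          simpa [hv] using h0
        linarith
      rw [hesum]
      field_simp [hp' j, hω' j]
      ring
    rw [hrepr]
    exact Submodule.sum_mem _ fun i _ =>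
      Submodule.smul_mem _ _ (Submodule.subset_span ⟨i, rfl⟩)
end

section
/- Fix an integer ℓ ≥ 2, a vector α ∈ ℝ^ℓ with α_j > 0 for all j and ∑_{j=1}^ℓ α_j = 1, and positive reals ω_1, …, ω_ℓ. For every p ∈ S^{ℓ−1}_{++} and every vector v ∈ ℝ^ℓ with ⟨p, v⟩ = 0, there exist strictly positive reals μ_1, …, μ_ℓ such that v = ∑_{i=1}^ℓ μ_i z_i^{CD}(p). That is, the vectors z_1^{CD}(p), …, z_ℓ^{CD}(p) positively span the tangent hyperplane {v ∈ ℝ^ℓ : ⟨p, v⟩ = 0}. -/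
open Finset

/-- for every `p` in the positive part of the unit sphere, the vectors
`zCD α ω 1 p, …, zCD α ω ℓ p` positively span the tangent hyperplane
`{v | ⟨p, v⟩ = 0}`: every such `v` is a linear combination of them with strictly
positive coefficients. -/
theorem zCD_positively_spans_tangent_hyperplane
    (ℓ : ℕ) (hℓ : 2 ≤ ℓ)
    (α : Fin ℓ → ℝ) (hα : ∀ j, 0 < α j) (hαsum : ∑ j, α j = 1)
    (ω : Fin ℓ → ℝ) (hω : ∀ j, 0 < ω j) :
    ∀ p : Fin ℓ → ℝ, (∀ j, 0 < p j) → ∑ j, (p j) ^ 2 = 1 →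
      ∀ v : Fin ℓ → ℝ, (∑ j, p j * v j = 0) →
        ∃ μ : Fin ℓ → ℝ, (∀ i, 0 < μ i) ∧ v = ∑ i, μ i • zCD α ω i p := by
  intro p hp hpnorm v hv
  set S : ℝ := 1 + ∑ j, |v j * p j / α j| with hSdef
  have hSgt : ∀ j, v j * p j / α j < S := by
    intro j
    have h1 : v j * p j / α j ≤ |v j * p j / α j| := le_abs_self _
    have h2 : |v j * p j / α j| ≤ ∑ i, |v i * p i / α i| :=
      Finset.single_le_sum (f := fun i => |v i * p i / α i|)
        (fun i _ => abs_nonneg _) (Finset.mem_univ j)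
    linarith
  set μ : Fin ℓ → ℝ := fun j => (α j * S / p j - v j) / ω j with hμdef
  have hμpos : ∀ j, 0 < μ j := by
    intro j
    have h1 : v j * p j < S * α j := (div_lt_iff₀ (hα j)).mp (hSgt j)
    have h2 : v j < α j * S / p j := by
      rw [lt_div_iff₀ (hp j)]; nlinarith
    exact div_pos (by linarith) (hω j)
  have hμω : ∀ j, μ j * ω j = α j * S / p j - v j := by
    intro j
    simp only [hμdef]
    rw [div_mul_cancel₀ _ (hω j).ne']
  have hsum : ∑ i, μ i * ω i * p i = S := by
    have hterm : ∀ i, μ i * ω i * p i = α i * S - v i * p i := by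
      intro i
      rw [hμω i, sub_mul, div_mul_cancel₀ _ (hp i).ne']
    calc ∑ i, μ i * ω i * p i = ∑ i, (α i * S - v i * p i) := by
          exact Finset.sum_congr rfl fun i _ => hterm i
      _ = (∑ i, α i) * S - ∑ i, p i * v i := by
          rw [Finset.sum_sub_distrib, Finset.sum_mul]
          congr 1
          exact Finset.sum_congr rfl fun i _ => by ring
      _ = S := by rw [hαsum, hv]; ring
  refine ⟨μ, hμpos, ?_⟩
  funext j
  have hpj := (hp j).ne'
  have hterm : ∀ i, μ i * zCD α ω i p j
      = α j / p j * (μ i * ω i * p i) - (if i = j then μ j * ω j else 0) := by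
    intro i
    rcases eq_or_ne i j with rfl | hij
    · simp only [zCD, if_pos rfl, eq_self_iff_true, if_true]
      field_simp
      ring
    · simp only [zCD, if_neg (Ne.symm hij), if_neg hij]
      field_simp
      ring
  have : (∑ i, μ i • zCD α ω i p) j = ∑ i, μ i * zCD α ω i p j := by
    simp [Finset.sum_apply]
  rw [this]
  symm
  calc ∑ i, μ i * zCD α ω i p j
      = ∑ i, (α j / p j * (μ i * ω i * p i) - (if i = j then μ j * ω j else 0)) :=
        Finset.sum_congr rfl fun i _ => hterm i
    _ = α j / p j * (∑ i, μ i * ω i * p i) - μ j * ω j := by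
        rw [Finset.sum_sub_distrib, ← Finset.mul_sum, Finset.sum_ite_eq' Finset.univ j]
        simp
    _ = v j := by
        rw [hsum, hμω j]
        field_simp
        ring
end

section
/- Let E be a real vector space and let v_1, …, v_m ∈ E be vectors whose linear span is all of E. Suppose there exist strictly positive reals c_1, …, c_m with ∑_{i=1}^m c_i v_i = 0. Then for every w ∈ E there exist strictly positive reals μ_1, …, μ_m such that w = ∑_{i=1}^m μ_i v_i. -/
open Finset

/-- if vectors `v 1, …, v m` span a real vector space `E` and admit a
vanishing linear combination with strictly positive coefficients, then they positively
span `E`: every `w ∈ E` is a linear combination of the `v i` with strictly positive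
coefficients. -/
theorem positively_spans_of_span_top_of_pos_relation
    (E : Type*) [AddCommGroup E] [Module ℝ E]
    (m : ℕ) (v : Fin m → E)
    (hspan : Submodule.span ℝ (Set.range v) = ⊤)
    (c : Fin m → ℝ) (hc : ∀ i, 0 < c i) (hrel : ∑ i, c i • v i = 0) :
    ∀ w : E, ∃ μ : Fin m → ℝ, (∀ i, 0 < μ i) ∧ w = ∑ i, μ i • v i := by
  intro w
  have hw : w ∈ Submodule.span ℝ (Set.range v) := hspan ▸ Submodule.mem_top
  obtain ⟨a, ha⟩ := (Submodule.mem_span_range_iff_exists_fun ℝ).mp hw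
  set t : ℝ := 1 + ∑ i, |a i| / c i with ht
  have hts : ∀ j, |a j| / c j ≤ ∑ i, |a i| / c i := fun j =>
    Finset.single_le_sum (f := fun i => |a i| / c i) (fun i _ => div_nonneg (abs_nonneg _) (hc i).le) (mem_univ j)
  refine ⟨fun i => a i + t * c i, fun i => ?_, ?_⟩
  all_goals dsimp only
  · have h1 : |a i| / c i < t := lt_of_le_of_lt (hts i) (by simp [ht])
    have h2 : |a i| < t * c i := (div_lt_iff₀ (hc i)).mp h1
    have := neg_abs_le (a i)
    linarith
  · rw [Finset.sum_congr rfl (fun i _ => add_smul (a i) (t * c i) (v i)),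
      Finset.sum_add_distrib, ha]
    simp [mul_smul, ← Finset.smul_sum, hrel]
end

section
/- (Theorem 3.1) Fix an integer ℓ ≥ 2, a vector α ∈ ℝ^ℓ with α_j > 0 for all j and ∑_{j=1}^ℓ α_j = 1, positive reals ω_1, …, ω_ℓ, and k ∈ ℕ ∪ {∞}. Let z : ℝ^ℓ → ℝ^ℓ be a map that is C^k on S^{ℓ−1}_{++} (in the sense of ContDiffOn) and satisfies ⟨p, z(p)⟩ = 0 for every p ∈ S^{ℓ−1}_{++}. Then there exist functions μ_1, …, μ_ℓ : ℝ^ℓ → ℝ, each C^k on S^{ℓ−1}_{++}, with μ_i(p) > 0 for every p ∈ S^{ℓ−1}_{++} and every i, such that z(p) = ∑_{i=1}^ℓ μ_i(p) z_i^{CD}(p) for every p ∈ S^{ℓ−1}_{++}. -/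
open Finset

/-- Auxiliary smooth scaling function. -/
noncomputable def cAux {ℓ : ℕ} (α : Fin ℓ → ℝ) (z : (Fin ℓ → ℝ) → (Fin ℓ → ℝ))
    (p : Fin ℓ → ℝ) : ℝ :=
  1 + ∑ j, (p j * z p j / α j) ^ 2

/-- Auxiliary weight functions. -/
noncomputable def muAux {ℓ : ℕ} (α ω : Fin ℓ → ℝ) (z : (Fin ℓ → ℝ) → (Fin ℓ → ℝ))
    (i : Fin ℓ) (p : Fin ℓ → ℝ) : ℝ :=
  (α i * cAux α z p / p i - z p i) / ω i

/-- Theorem 3.1: every map `z` which is `C^k` on the positive part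
`S = S^{ℓ-1}_{++}` of the unit sphere and satisfies Walras' law `⟨p, z p⟩ = 0` on `S`
can be written, on `S`, as `z p = ∑ i, μ i p • zCD α ω i p` where each `μ i` is `C^k`
on `S` and strictly positive on `S`. -/
theorem smooth_decomposition_by_cobbDouglas
    (ℓ : ℕ) (hℓ : 2 ≤ ℓ)
    (α : Fin ℓ → ℝ) (hα : ∀ j, 0 < α j) (hαsum : ∑ j, α j = 1)
    (ω : Fin ℓ → ℝ) (hω : ∀ j, 0 < ω j)
    (k : ℕ∞)
    (z : (Fin ℓ → ℝ) → (Fin ℓ → ℝ))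
    (S : Set (Fin ℓ → ℝ))
    (hS : S = {p : Fin ℓ → ℝ | (∀ j, 0 < p j) ∧ ∑ j, (p j) ^ 2 = 1})
    (hz : ContDiffOn ℝ k z S)
    (hWalras : ∀ p ∈ S, ∑ j, p j * z p j = 0) :
    ∃ μ : Fin ℓ → (Fin ℓ → ℝ) → ℝ,
      (∀ i, ContDiffOn ℝ k (μ i) S) ∧
      (∀ p ∈ S, ∀ i, 0 < μ i p) ∧
      (∀ p ∈ S, z p = ∑ i, μ i p • zCD α ω i p) := by
  classical
  have hpos : ∀ p ∈ S, ∀ j : Fin ℓ, 0 < p j := by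
    intro p hp
    rw [hS] at hp
    exact hp.1
  -- positivity bound for cAux
  have hci : ∀ (p : Fin ℓ → ℝ) (i : Fin ℓ), p i * z p i / α i < cAux α z p := by
    intro p i
    have h1 : (p i * z p i / α i) ^ 2 ≤ ∑ j, (p j * z p j / α j) ^ 2 :=
      Finset.single_le_sum (f := fun j => (p j * z p j / α j) ^ 2)
        (fun j _ => sq_nonneg _) (mem_univ i)
    unfold cAux
    nlinarith [sq_nonneg (p i * z p i / α i - 1)]
  -- key sum identity
  have hsum : ∀ p ∈ S, ∑ i, muAux α ω z i p * ω i * p i = cAux α z p := by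
    intro p hp
    have hterm : ∀ i : Fin ℓ, muAux α ω z i p * ω i * p i
        = α i * cAux α z p - p i * z p i := by
      intro i
      unfold muAux
      field_simp [(hω i).ne', (hpos p hp i).ne']
    rw [Finset.sum_congr rfl (fun i _ => hterm i), Finset.sum_sub_distrib,
      ← Finset.sum_mul, hαsum, hWalras p hp]
    ring
  refine ⟨muAux α ω z, ?_, ?_, ?_⟩
  · -- smoothness
    intro i
    have hproj : ∀ j : Fin ℓ, ContDiffOn ℝ k (fun p : Fin ℓ → ℝ => p j) S := fun j =>
      (ContinuousLinearMap.proj (R := ℝ) (φ := fun _ : Fin ℓ => ℝ) j).contDiff.contDiffOn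
    have hzj : ∀ j : Fin ℓ, ContDiffOn ℝ k (fun p => z p j) S := fun j =>
      (ContinuousLinearMap.proj (R := ℝ) (φ := fun _ : Fin ℓ => ℝ) j).contDiff.comp_contDiffOn hz
    have hcC : ContDiffOn ℝ k (cAux α z) S := by
      unfold cAux
      refine contDiffOn_const.add (ContDiffOn.sum fun j _ => ?_)
      exact (((hproj j).mul (hzj j)).div_const _).pow 2
    have hpi_ne : ∀ p ∈ S, p i ≠ 0 := fun p hp => (hpos p hp i).ne'
    exact (((contDiffOn_const.mul hcC).div (hproj i) hpi_ne).sub (hzj i)).div_const _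
  · -- positivity
    intro p hp i
    have hpi := hpos p hp i
    have hzi : z p i = α i * (p i * z p i / α i) / p i := by
      field_simp [(hα i).ne', hpi.ne']
    have hgt : α i * cAux α z p / p i - z p i > 0 := by
      rw [hzi]
      have : α i * cAux α z p / p i - α i * (p i * z p i / α i) / p i
          = α i * (cAux α z p - p i * z p i / α i) / p i := by ring
      rw [this]
      exact div_pos (mul_pos (hα i) (sub_pos.mpr (hci p i))) hpi
    exact div_pos hgt (hω i)
  · -- the decomposition
    intro p hp
    funext j
    have hpj := (hpos p hp j).ne'
    simp only [Finset.sum_apply, Pi.smul_apply, smul_eq_mul]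
    have step : ∀ i : Fin ℓ, muAux α ω z i p * zCD α ω i p j
        = (α j / p j) * (muAux α ω z i p * ω i * p i)
          - (if i = j then muAux α ω z j p * ω j else 0) := by
      intro i
      unfold zCD
      by_cases h : i = j
      · subst h
        simp only [if_pos rfl, if_true, eq_self_iff_true]
        field_simp
        ring
      · simp only [if_neg (Ne.symm h), if_neg h]
        field_simp
        ring
    rw [Finset.sum_congr rfl (fun i _ => step i), Finset.sum_sub_distrib,
      ← Finset.mul_sum, hsum p hp, Finset.sum_ite_eq' univ j, if_pos (mem_univ j)]
    unfold muAux
    field_simp [hpj, (hω j).ne']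
    ring
end
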